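/- Let C be a triangulated category with a weight structure w and M an object of C. If H(M) = 0 for every cohomological functor H : C^op → Ab of weight range [m,n], then M is without weights m,...,n. -/

import Mathlib

open CategoryTheory CategoryTheory.Limits CategoryTheory.Pretriangulated Opposite

universe v u

variable (C : Type u) [Category.{v} C] [Preadditive C] [HasZeroObject C]
  [HasShift C ℤ] [∀ n : ℤ, (shiftFunctor C n).Additive] [Pretriangulated C]

/-- A weight structure on the triangulated category `C`. -/
structure WeightStructure where
  /-- the class `C_{w ≤ n}` -/
  le : ℤ → Set C
  /-- the class `C_{w ≥ n}` -/
  ge : ℤ → Set C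
  le_iso_closed : ∀ (n : ℤ) (X Y : C), (X ≅ Y) → X ∈ le n → Y ∈ le n
  ge_iso_closed : ∀ (n : ℤ) (X Y : C), (X ≅ Y) → X ∈ ge n → Y ∈ ge n
  le_retract : ∀ (n : ℤ) (X Y : C) (a : X ⟶ Y) (b : Y ⟶ X),
    a ≫ b = 𝟙 X → Y ∈ le n → X ∈ le n
  ge_retract : ∀ (n : ℤ) (X Y : C) (a : X ⟶ Y) (b : Y ⟶ X),
    a ≫ b = 𝟙 X → Y ∈ ge n → X ∈ ge n
  le_shift : ∀ (n k : ℤ) (X : C), X ∈ le n → X⟦k⟧ ∈ le (n + k)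
  ge_shift : ∀ (n k : ℤ) (X : C), X ∈ ge n → X⟦k⟧ ∈ ge (n + k)
  le_mono : ∀ n : ℤ, le n ⊆ le (n + 1)
  ge_anti : ∀ n : ℤ, ge (n + 1) ⊆ ge n
  orth : ∀ (n : ℤ) (X Y : C), X ∈ le n → Y ∈ ge (n + 1) → ∀ f : X ⟶ Y, f = 0
  decomp : ∀ (X : C) (k : ℤ), ∃ (A B : C) (x : A ⟶ X) (y : X ⟶ B) (δ : B ⟶ A⟦(1 : ℤ)⟧),
    (Triangle.mk x y δ ∈ distTriang C) ∧ A ∈ le k ∧ B ∈ ge (k + 1)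

variable {C}

/-- `(A, B, x, y)` is a `k`-weight decomposition of `X`. -/
def WeightStructure.IsWeightDecomp (w : WeightStructure C) (k : ℤ) {X : C} (A B : C)
    (x : A ⟶ X) (y : X ⟶ B) : Prop :=
  (∃ δ : B ⟶ A⟦(1 : ℤ)⟧, Triangle.mk x y δ ∈ distTriang C) ∧ A ∈ w.le k ∧ B ∈ w.ge (k + 1)

/-- `g : M ⟶ N` kills weights `m, …, n`. -/
def WeightStructure.KillsWeights (w : WeightStructure C) (m n : ℤ) {M N : C}
    (g : M ⟶ N) : Prop :=
  ∃ (A A' B B' : C) (x : A ⟶ M) (x' : M ⟶ A') (y' : B ⟶ N) (y : N ⟶ B'),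
    w.IsWeightDecomp n A A' x x' ∧ w.IsWeightDecomp (m - 1) B B' y' y ∧
      x ≫ g ≫ y = 0

/-- The class of objects of `C` without weights `m, …, n`. -/
def WeightStructure.without (w : WeightStructure C) (m n : ℤ) : Set C :=
  {M : C | w.KillsWeights m n (𝟙 M)}


/-- A contravariant additive functor `H : Cᵒᵖ ⥤ A` is cohomological if it sends
distinguished triangles to exact sequences. -/
def IsCohomological {A : Type*} [Category A] [Abelian A] (H : Cᵒᵖ ⥤ A)
    [H.Additive] : Prop :=
  ∀ (T : Triangle C) (hT : T ∈ distTriang C),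
    (ShortComplex.mk (H.map T.mor₂.op) (H.map T.mor₁.op)
      (by rw [← H.map_comp, ← op_comp, comp_distTriang_mor_zero₁₂ T hT, op_zero,
        H.map_zero])).Exact

/-- `H` has weight range `[m, n]`: it annihilates `C_{w ≤ m-1}` and `C_{w ≥ n+1}`. -/
def WeightRange {A : Type*} [Category A] [Abelian A] (w : WeightStructure C)
    (m n : ℤ) (H : Cᵒᵖ ⥤ A) : Prop :=
  (∀ X ∈ w.le (m - 1), IsZero (H.obj (op X))) ∧
    (∀ X ∈ w.ge (n + 1), IsZero (H.obj (op X)))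


namespace Stmt4Aux

variable (w : WeightStructure C) (n : ℤ)

/-- `k ≤ k'` implies `le k ⊆ le k'`. -/
lemma le_subset {k k' : ℤ} (h : k ≤ k') : w.le k ⊆ w.le k' := by
  obtain ⟨d, rfl⟩ : ∃ d : ℕ, k' = k + d := ⟨(k' - k).toNat, by omega⟩
  clear h
  induction d with
  | zero => simp only [Nat.cast_zero, add_zero]; exact subset_rfl
  | succ d ih =>
      have hd : (k + ((d : ℤ) + 1)) = (k + d) + 1 := by ring
      have : ((d + 1 : ℕ) : ℤ) = (d : ℤ) + 1 := by push_cast; ring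
      rw [this, hd]
      exact ih.trans (w.le_mono _)

lemma le_shift' {V : C} {k d k' : ℤ} (h : V ∈ w.le k) (hk : k + d = k') :
    (V⟦d⟧) ∈ w.le k' := hk ▸ w.le_shift k d V h

/-- extension-closedness of `le k`. -/
lemma le_ext {k : ℤ} {T : Triangle C} (hT : T ∈ distTriang C)
    (h1 : T.obj₁ ∈ w.le k) (h3 : T.obj₃ ∈ w.le k) : T.obj₂ ∈ w.le k := by
  obtain ⟨A, B, x, y, δ, hdist, hA, hB⟩ := w.decomp T.obj₂ k
  have h1' : T.mor₁ ≫ y = 0 := w.orth k _ _ h1 hB _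
  obtain ⟨g, hg⟩ := Triangle.yoneda_exact₂ _ hT y h1'
  have h2 : g = 0 := w.orth k _ _ h3 hB g
  have hy : y = 0 := by rw [hg, h2, comp_zero]
  obtain ⟨r, hr⟩ := Triangle.coyoneda_exact₂ _ hdist (𝟙 T.obj₂) (by
    show 𝟙 T.obj₂ ≫ y = 0
    rw [hy, comp_zero])
  exact w.le_retract k _ _ r x hr.symm hA

/-- The data of a weight decomposition at level `n`. -/
structure Dec (V : C) where
  A : C
  A' : C
  x : A ⟶ V
  x' : V ⟶ A'
  δ : A' ⟶ A⟦(1 : ℤ)⟧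
  dist : Triangle.mk x x' δ ∈ distTriang C
  hA : A ∈ w.le n
  hA' : A' ∈ w.ge (n + 1)

/-- A global choice of weight decompositions at level `n`. -/
noncomputable def dec (V : C) : Dec w n V :=
  Classical.choice (by
    obtain ⟨A, B, x, y, δ, h1, h2, h3⟩ := w.decomp V n
    exact ⟨⟨A, B, x, y, δ, h1, h2, h3⟩⟩)

/-- The weight decomposition triangle. -/
noncomputable def decTri (V : C) : Triangle C :=
  Triangle.mk (dec w n V).x (dec w n V).x' (dec w n V).δ

lemma decTri_dist (V : C) : decTri w n V ∈ distTriang C := (dec w n V).dist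

/-- Its inverse rotation : `A'⟦-1⟧ ⟶ A ⟶ V ⟶ A'`. -/
noncomputable def decTriInv (V : C) : Triangle C := (decTri w n V).invRotate

lemma decTriInv_dist (V : C) : decTriInv w n V ∈ distTriang C :=
  inv_rot_of_distTriang _ (decTri_dist w n V)

/-- The boundary map `A'⟦-1⟧ ⟶ A`. -/
noncomputable def par (V : C) : ((dec w n V).A')⟦(-1 : ℤ)⟧ ⟶ (dec w n V).A :=
  (decTriInv w n V).mor₁

lemma decTriInv_eq (V : C) :
    decTriInv w n V = Triangle.mk (par w n V) (dec w n V).x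
      ((dec w n V).x' ≫ (shiftEquiv C (1 : ℤ)).counitIso.inv.app _) := rfl

lemma par_comp_x (V : C) : par w n V ≫ (dec w n V).x = 0 :=
  comp_distTriang_mor_zero₁₂ _ (decTriInv_dist w n V)

/-- every map from `le n` into `V` lifts through `x_V`. -/
lemma lift_exists {T V : C} (hT : T ∈ w.le n) (t : T ⟶ V) :
    ∃ t' : T ⟶ (dec w n V).A, t' ≫ (dec w n V).x = t := by
  have h : t ≫ (dec w n V).x' = 0 := w.orth n _ _ hT (dec w n V).hA' _
  obtain ⟨g, hg⟩ := Triangle.coyoneda_exact₂ _ (decTri_dist w n V) t h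
  exact ⟨g, hg.symm⟩

/-- maps into `A_V` killing `x_V` factor through the boundary. -/
lemma factor_through_par {W V : C} (f : W ⟶ (dec w n V).A)
    (hf : f ≫ (dec w n V).x = 0) :
    ∃ g : W ⟶ ((dec w n V).A')⟦(-1 : ℤ)⟧, f = g ≫ par w n V := by
  obtain ⟨g, hg⟩ := Triangle.coyoneda_exact₂ _ (decTriInv_dist w n V) f hf
  exact ⟨g, hg⟩


variable (B' : C)

/-- the subgroup of maps `V ⟶ B'` killed by all maps from `le n` objects. -/
def J (V : C) : AddSubgroup (V ⟶ B') where
  carrier := {f | ∀ (T : C), T ∈ w.le n → ∀ t : T ⟶ V, t ≫ f = 0}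
  add_mem' := by
    intro f g hf hg T hT t
    rw [Preadditive.comp_add, hf T hT t, hg T hT t, add_zero]
  zero_mem' := by intro T hT t; exact comp_zero
  neg_mem' := by
    intro f hf T hT t
    rw [Preadditive.comp_neg, hf T hT t, neg_zero]

lemma mem_J {V : C} {f : V ⟶ B'} :
    f ∈ J w n B' V ↔ ∀ (T : C), T ∈ w.le n → ∀ t : T ⟶ V, t ≫ f = 0 := Iff.rfl

lemma mem_J_of_comp {V V' : C} {f : V' ⟶ B'} (hf : f ∈ J w n B' V') (g : V ⟶ V') :
    g ≫ f ∈ J w n B' V := by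
  intro T hT t
  rw [← Category.assoc]
  exact hf T hT (t ≫ g)

lemma mem_J_iff_x_comp {V : C} (f : V ⟶ B') :
    f ∈ J w n B' V ↔ (dec w n V).x ≫ f = 0 := by
  constructor
  · intro h
    exact h _ (dec w n V).hA _
  · intro h T hT t
    obtain ⟨t', ht'⟩ := lift_exists w n hT t
    rw [← ht', Category.assoc, h, comp_zero]

/-- The group of "weight cocycles" `A_V ⟶ B'`. -/
def Zsub (V : C) : AddSubgroup ((dec w n V).A ⟶ B') where
  carrier := {φ | par w n V ≫ φ ∈ J w n B' (((dec w n V).A')⟦(-1 : ℤ)⟧)}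
  add_mem' := by
    intro f g hf hg
    simp only [Set.mem_setOf_eq, Preadditive.comp_add]
    exact AddSubgroup.add_mem _ hf hg
  zero_mem' := by
    simp only [Set.mem_setOf_eq, comp_zero]
    exact AddSubgroup.zero_mem _
  neg_mem' := by
    intro f hf
    simp only [Set.mem_setOf_eq, Preadditive.comp_neg]
    exact AddSubgroup.neg_mem _ hf

lemma mem_Zsub {V : C} {φ : (dec w n V).A ⟶ B'} :
    φ ∈ Zsub w n B' V ↔ par w n V ≫ φ ∈ J w n B' (((dec w n V).A')⟦(-1 : ℤ)⟧) :=
  Iff.rfl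

/-- existence of lifts of morphisms to the chosen decompositions. -/
lemma tmap_exists {V V' : C} (g : V ⟶ V') :
    ∃ g' : (dec w n V).A ⟶ (dec w n V').A, g' ≫ (dec w n V').x = (dec w n V).x ≫ g :=
  lift_exists w n (dec w n V).hA ((dec w n V).x ≫ g)

/-- a chosen lift of `g` to the decompositions. -/
noncomputable def tmap {V V' : C} (g : V ⟶ V') : (dec w n V).A ⟶ (dec w n V').A :=
  (tmap_exists w n g).choose

lemma tmap_spec {V V' : C} (g : V ⟶ V') :
    tmap w n g ≫ (dec w n V').x = (dec w n V).x ≫ g :=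
  (tmap_exists w n g).choose_spec

/-- independence of the choice of lift, on cocycles. -/
lemma lift_indep {V V' : C} {g₁ g₂ : (dec w n V).A ⟶ (dec w n V').A}
    (h : g₁ ≫ (dec w n V').x = g₂ ≫ (dec w n V').x)
    {φ : (dec w n V').A ⟶ B'} (hφ : φ ∈ Zsub w n B' V') : g₁ ≫ φ = g₂ ≫ φ := by
  have h0 : (g₁ - g₂) ≫ (dec w n V').x = 0 := by
    rw [Preadditive.sub_comp, h, sub_self]
  obtain ⟨ρ, hρ⟩ := factor_through_par w n _ h0
  have : (g₁ - g₂) ≫ φ = ρ ≫ (par w n V' ≫ φ) := by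
    rw [hρ, Category.assoc]
  have hz : (g₁ - g₂) ≫ φ = 0 := by
    rw [this]
    exact hφ _ (dec w n V).hA ρ
  have h1 : g₁ ≫ φ - g₂ ≫ φ = 0 := by rw [← Preadditive.sub_comp]; exact hz
  exact sub_eq_zero.mp h1

/-- cocycles are stable under the transition maps. -/
lemma tmap_mem {V V' : C} (g : V ⟶ V') {φ : (dec w n V').A ⟶ B'}
    (hφ : φ ∈ Zsub w n B' V') : tmap w n g ≫ φ ∈ Zsub w n B' V := by
  have h0 : (par w n V ≫ tmap w n g) ≫ (dec w n V').x = 0 := by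
    rw [Category.assoc, tmap_spec, ← Category.assoc, par_comp_x, zero_comp]
  obtain ⟨ρ, hρ⟩ := factor_through_par w n _ h0
  rw [mem_Zsub]
  intro T hT t
  have key : t ≫ par w n V ≫ tmap w n g ≫ φ = (t ≫ ρ) ≫ (par w n V' ≫ φ) := by
    rw [← Category.assoc (par w n V) (tmap w n g) φ, hρ]
    simp only [Category.assoc]
  rw [key]
  exact hφ _ hT (t ≫ ρ)

/-- The weight-cohomology functor. -/
noncomputable def Hfun : Cᵒᵖ ⥤ AddCommGrpCat.{v} where
  obj V := AddCommGrpCat.of (Zsub w n B' V.unop)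
  map {V V'} g := AddCommGrpCat.ofHom
    { toFun := fun φ => ⟨tmap w n g.unop ≫ φ.1, tmap_mem w n B' g.unop φ.2⟩
      map_zero' := by
        apply Subtype.ext
        simp only [AddSubgroup.coe_zero, comp_zero]
      map_add' := by
        intro φ ψ
        apply Subtype.ext
        simp only [AddSubgroup.coe_add, Preadditive.comp_add] }
  map_id V := by
    refine AddCommGrpCat.ext (fun φ => ?_)
    apply Subtype.ext
    show tmap w n (𝟙 V.unop) ≫ φ.1 = φ.1
    have h := lift_indep w n B' (g₁ := tmap w n (𝟙 V.unop)) (g₂ := 𝟙 _)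
      (by rw [tmap_spec, Category.comp_id, Category.id_comp]) φ.2
    rw [h]
    exact Category.id_comp _
  map_comp {V V' V''} g h := by
    refine AddCommGrpCat.ext (fun φ => ?_)
    apply Subtype.ext
    show tmap w n (h.unop ≫ g.unop) ≫ φ.1 = tmap w n h.unop ≫ tmap w n g.unop ≫ φ.1
    have h2 : (tmap w n h.unop ≫ tmap w n g.unop) ≫ (dec w n V.unop).x
        = tmap w n (h.unop ≫ g.unop) ≫ (dec w n V.unop).x := by
      rw [Category.assoc, tmap_spec, ← Category.assoc, tmap_spec, tmap_spec,
        Category.assoc]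
    have h3 := lift_indep w n B' h2 φ.2
    rw [Category.assoc] at h3
    exact h3.symm

instance Hfun_additive : (Hfun w n B').Additive where
  map_add := by
    intro V V' f g
    refine AddCommGrpCat.ext (fun φ => ?_)
    apply Subtype.ext
    show tmap w n (f + g).unop ≫ φ.1
      = tmap w n f.unop ≫ φ.1 + tmap w n g.unop ≫ φ.1
    have h2 : (tmap w n f.unop + tmap w n g.unop) ≫ (dec w n V.unop).x
        = tmap w n (f + g).unop ≫ (dec w n V.unop).x := by
      rw [Preadditive.add_comp, tmap_spec, tmap_spec, tmap_spec]
      show _ = (dec w n V'.unop).x ≫ (f.unop + g.unop)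
      rw [Preadditive.comp_add]
    rw [← lift_indep w n B' h2 φ.2, Preadditive.add_comp]


/-- elements of a zero object vanish. -/
lemma elem_zero {G : AddCommGrpCat.{v}} (h : IsZero G) (x : G) : x = 0 := by
  have h1 : (𝟙 G) = (0 : G ⟶ G) := h.eq_of_src _ _
  calc x = (𝟙 G) x := by simp
    _ = (0 : G ⟶ G) x := by rw [h1]
    _ = 0 := by simp

/-- vanishing of the functor on `le (m-1)`. -/
lemma isZero_of_le (m : ℤ) (hm : m - 1 ≤ n) (hB' : B' ∈ w.ge ((m - 1) + 1))
    {V : C} (hV : V ∈ w.le (m - 1)) : IsZero ((Hfun w n B').obj (op V)) := by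
  have key : ∀ φ : Zsub w n B' V, φ = 0 := by
    intro φ
    apply Subtype.ext
    show φ.1 = 0
    have hVn : V ∈ w.le n := le_subset w hm hV
    have hx' : (dec w n V).x' = 0 := w.orth n _ _ hVn (dec w n V).hA' _
    obtain ⟨r, hr⟩ := Triangle.coyoneda_exact₂ _ (decTri_dist w n V) (𝟙 V)
      (by show 𝟙 V ≫ (dec w n V).x' = 0; rw [hx', comp_zero])
    let r₀ : V ⟶ (dec w n V).A := r
    have hr₀ : 𝟙 V = r₀ ≫ (dec w n V).x := hr
    clear hr
    have h1 : (𝟙 ((dec w n V).A) - (dec w n V).x ≫ r₀) ≫ (dec w n V).x = 0 := by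
      rw [Preadditive.sub_comp, Category.id_comp, Category.assoc, ← hr₀,
        Category.comp_id, sub_self]
    obtain ⟨ρ, hρ⟩ := factor_through_par w n _ h1
    have e1 : (𝟙 ((dec w n V).A) - (dec w n V).x ≫ r₀) ≫ φ.1 = 0 := by
      rw [hρ, Category.assoc]
      exact φ.2 _ (dec w n V).hA ρ
    have e2 : ((dec w n V).x ≫ r₀) ≫ φ.1 = 0 := by
      have hro : r₀ ≫ φ.1 = 0 := w.orth (m - 1) _ _ hV hB' _
      rw [Category.assoc, hro, comp_zero]
    calc φ.1 = (𝟙 _) ≫ φ.1 := (Category.id_comp _).symm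
      _ = ((𝟙 ((dec w n V).A) - (dec w n V).x ≫ r₀) + (dec w n V).x ≫ r₀) ≫ φ.1 := by
          rw [sub_add_cancel]
      _ = 0 := by rw [Preadditive.add_comp, e1, e2, add_zero]
  have hss : Subsingleton (Zsub w n B' V) := ⟨fun a b => by rw [key a, key b]⟩
  exact @AddCommGrpCat.isZero_of_subsingleton (AddCommGrpCat.of (Zsub w n B' V)) hss

/-- vanishing of the functor on `ge (n+1)`. -/
lemma isZero_of_ge {V : C} (hV : V ∈ w.ge (n + 1)) :
    IsZero ((Hfun w n B').obj (op V)) := by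
  have key : ∀ φ : Zsub w n B' V, φ = 0 := by
    intro φ
    apply Subtype.ext
    show φ.1 = 0
    have hx : (dec w n V).x = 0 := w.orth n _ _ (dec w n V).hA hV _
    have h1 : (𝟙 ((dec w n V).A)) ≫ (dec w n V).x = 0 := by rw [hx, comp_zero]
    obtain ⟨ρ, hρ⟩ := factor_through_par w n _ h1
    calc φ.1 = (𝟙 _) ≫ φ.1 := (Category.id_comp _).symm
      _ = ρ ≫ (par w n V ≫ φ.1) := by rw [hρ, Category.assoc]
      _ = 0 := φ.2 _ (dec w n V).hA ρ
  have hss : Subsingleton (Zsub w n B' V) := ⟨fun a b => by rw [key a, key b]⟩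
  exact @AddCommGrpCat.isZero_of_subsingleton (AddCommGrpCat.of (Zsub w n B' V)) hss



/-- factorization through the first object of a cone triangle, with clean types. -/
lemma cone_factor {X' Y' Z' : C} {f : X' ⟶ Y'} {g : Y' ⟶ Z'} {h : Z' ⟶ X'⟦(1 : ℤ)⟧}
    (hd : Triangle.mk f g h ∈ distTriang C) {W : C} (u : W ⟶ Y') (hu : u ≫ g = 0) :
    ∃ v : W ⟶ X', u = v ≫ f :=
  Triangle.coyoneda_exact₂ _ hd u hu

/-- factorization out of the middle object of an inverse-rotated cone triangle. -/
lemma invRot_factor_out {X' Y' Z' : C} {f : X' ⟶ Y'} {g : Y' ⟶ Z'} {h : Z' ⟶ X'⟦(1 : ℤ)⟧}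
    (hd : Triangle.mk f g h ∈ distTriang C) {W : C} (u : X' ⟶ W)
    (hu : (Triangle.mk f g h).invRotate.mor₁ ≫ u = 0) :
    ∃ v : Y' ⟶ W, u = f ≫ v :=
  Triangle.yoneda_exact₂ _ (inv_rot_of_distTriang _ hd) u hu

/-- The key theorem: the weight-cohomology functor is cohomological. -/
lemma Hfun_cohomological : IsCohomological (Hfun w n B') := by
  intro T hT
  rw [ShortComplex.ab_exact_iff]
  intro φ hφ0
  -- the hypothesis : the restriction of φ to A_X vanishes
  have hφa : tmap w n T.mor₁ ≫ φ.1 = 0 := congrArg Subtype.val hφ0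
  -- complete b̃ := tmap T.mor₂ to a distinguished triangle
  obtain ⟨F', γ, dF, hTb⟩ := Pretriangulated.distinguished_cocone_triangle (tmap w n T.mor₂)
  have hTbInv : (Triangle.mk (tmap w n T.mor₂) γ dF).invRotate ∈ distTriang C :=
    inv_rot_of_distTriang _ hTb
  set α : (F'⟦(-1 : ℤ)⟧) ⟶ (dec w n T.obj₂).A :=
    (Triangle.mk (tmap w n T.mor₂) γ dF).invRotate.mor₁ with hα
  -- F' has weights ≤ n+1
  have hF' : F' ∈ w.le (n + 1) := by
    apply le_ext w (rot_of_distTriang _ hTb)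
    · exact w.le_mono n (dec w n T.obj₃).hA
    · exact le_shift' w (dec w n T.obj₂).hA rfl
  have hFm : (F'⟦(-1 : ℤ)⟧) ∈ w.le n := le_shift' w hF' (by ring)
  -- STEP A : α ≫ φ = 0
  have hstepA : α ≫ φ.1 = 0 := by
    have hJ : (α ≫ φ.1) ∈ J w n B' (F'⟦(-1 : ℤ)⟧) := by
      intro T' hT' t
      set s : T' ⟶ (dec w n T.obj₂).A := t ≫ α with hs
      have h9 : α ≫ tmap w n T.mor₂ = 0 := comp_distTriang_mor_zero₁₂ _ hTbInv
      have hs1 : (s ≫ (dec w n T.obj₂).x) ≫ T.mor₂ = 0 := by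
        rw [Category.assoc, ← tmap_spec w n T.mor₂, hs, Category.assoc,
          ← Category.assoc α, h9, zero_comp, comp_zero]
      obtain ⟨lam, hlam⟩ := Triangle.coyoneda_exact₂ T hT (s ≫ (dec w n T.obj₂).x) hs1
      obtain ⟨lam', hlam'⟩ := lift_exists w n hT' lam
      have h1 : (lam' ≫ tmap w n T.mor₁) ≫ (dec w n T.obj₂).x
          = s ≫ (dec w n T.obj₂).x := by
        rw [Category.assoc, tmap_spec, ← Category.assoc, hlam', ← hlam]
      have key : (s - lam' ≫ tmap w n T.mor₁) ≫ (dec w n T.obj₂).x = 0 := by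
        rw [Preadditive.sub_comp, h1, sub_self]
      obtain ⟨τ, hτ⟩ := factor_through_par w n _ key
      have e1 : (s - lam' ≫ tmap w n T.mor₁) ≫ φ.1 = 0 := by
        rw [hτ, Category.assoc]
        exact φ.2 _ hT' τ
      have e2 : (lam' ≫ tmap w n T.mor₁) ≫ φ.1 = 0 := by
        rw [Category.assoc, hφa, comp_zero]
      calc t ≫ (α ≫ φ.1) = s ≫ φ.1 := by rw [hs, Category.assoc]
        _ = ((s - lam' ≫ tmap w n T.mor₁) + lam' ≫ tmap w n T.mor₁) ≫ φ.1 := by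
            rw [sub_add_cancel]
        _ = 0 := by rw [Preadditive.add_comp, e1, e2, add_zero]
    have h10 := hJ _ hFm (𝟙 _)
    rwa [Category.id_comp] at h10
  -- STEP B : φ factors through b̃
  rw [hα] at hstepA
  obtain ⟨ψ₀, hψ₀'⟩ := invRot_factor_out hTb φ.1 hstepA
  -- STEP C : correct ψ₀ to a cocycle
  set P : C := ((dec w n T.obj₃).A')⟦(-1 : ℤ)⟧ with hPdef
  set θ : (dec w n P).A ⟶ F' := ((dec w n P).x ≫ par w n T.obj₃) ≫ γ with hθ
  obtain ⟨R', c, dR, hTθ⟩ := Pretriangulated.distinguished_cocone_triangle θ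
  have hTθInv : (Triangle.mk θ c dR).invRotate ∈ distTriang C :=
    inv_rot_of_distTriang _ hTθ
  set ρ : (R'⟦(-1 : ℤ)⟧) ⟶ (dec w n P).A := (Triangle.mk θ c dR).invRotate.mor₁ with hρdef
  have hR' : R' ∈ w.le (n + 1) := by
    apply le_ext w (rot_of_distTriang _ hTθ)
    · exact hF'
    · exact le_shift' w (dec w n P).hA rfl
  have hRm : (R'⟦(-1 : ℤ)⟧) ∈ w.le n := le_shift' w hR' (by ring)
  have hv : ρ ≫ ((dec w n P).x ≫ par w n T.obj₃ ≫ ψ₀) = 0 := by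
    set wmap : (R'⟦(-1 : ℤ)⟧) ⟶ (dec w n T.obj₃).A :=
      ρ ≫ (dec w n P).x ≫ par w n T.obj₃ with hwmap
    have h9 : ρ ≫ θ = 0 := comp_distTriang_mor_zero₁₂ _ hTθInv
    have hw1 : wmap ≫ γ = 0 := by
      rw [hθ] at h9
      rw [hwmap]
      simp only [Category.assoc] at h9 ⊢
      exact h9
    obtain ⟨w₁, hw₁⟩ := cone_factor hTb wmap hw1
    have hw2 : (w₁ ≫ (dec w n T.obj₂).x) ≫ T.mor₂ = 0 := by
      have hxz : wmap ≫ (dec w n T.obj₃).x = 0 := by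
        rw [hwmap, Category.assoc, Category.assoc, par_comp_x, comp_zero, comp_zero]
      rw [Category.assoc, ← tmap_spec w n T.mor₂, ← Category.assoc, ← hw₁, hxz]
    obtain ⟨lam₂, hlam₂⟩ := Triangle.coyoneda_exact₂ T hT _ hw2
    obtain ⟨lam₂', hlam₂'⟩ := lift_exists w n hRm lam₂
    have h1 : (lam₂' ≫ tmap w n T.mor₁) ≫ (dec w n T.obj₂).x
        = w₁ ≫ (dec w n T.obj₂).x := by
      rw [Category.assoc, tmap_spec, ← Category.assoc, hlam₂', ← hlam₂]
    have key₂ : (w₁ - lam₂' ≫ tmap w n T.mor₁) ≫ (dec w n T.obj₂).x = 0 := by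
      rw [Preadditive.sub_comp, h1, sub_self]
    obtain ⟨τ₂, hτ₂⟩ := factor_through_par w n _ key₂
    have e1 : (w₁ - lam₂' ≫ tmap w n T.mor₁) ≫ φ.1 = 0 := by
      rw [hτ₂, Category.assoc]
      exact φ.2 _ hRm τ₂
    have e2 : (lam₂' ≫ tmap w n T.mor₁) ≫ φ.1 = 0 := by
      rw [Category.assoc, hφa, comp_zero]
    have ew : w₁ ≫ φ.1 = 0 := by
      have hsplit : w₁ ≫ φ.1
          = ((w₁ - lam₂' ≫ tmap w n T.mor₁) + lam₂' ≫ tmap w n T.mor₁) ≫ φ.1 := by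
        rw [sub_add_cancel]
      rw [hsplit, Preadditive.add_comp, e1, e2, add_zero]
    calc ρ ≫ ((dec w n P).x ≫ par w n T.obj₃ ≫ ψ₀)
        = wmap ≫ ψ₀ := by rw [hwmap]; simp only [Category.assoc]
      _ = w₁ ≫ (tmap w n T.mor₂ ≫ ψ₀) := by rw [hw₁]; simp only [Category.assoc]
      _ = w₁ ≫ φ.1 := by rw [← hψ₀']
      _ = 0 := ew
  rw [hρdef] at hv
  obtain ⟨e, he'⟩ := invRot_factor_out hTθ _ hv
  set ψ : (dec w n T.obj₃).A ⟶ B' := ψ₀ - γ ≫ e with hψdef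
  have hmemψ : ψ ∈ Zsub w n B' T.obj₃ := by
    rw [mem_Zsub, mem_J_iff_x_comp]
    show (dec w n P).x ≫ (par w n T.obj₃ ≫ ψ) = 0
    have h2 : (dec w n P).x ≫ par w n T.obj₃ ≫ (γ ≫ e) = θ ≫ e := by
      rw [hθ]; simp only [Category.assoc]
    calc (dec w n P).x ≫ (par w n T.obj₃ ≫ (ψ₀ - γ ≫ e))
        = ((dec w n P).x ≫ par w n T.obj₃ ≫ ψ₀)
            - ((dec w n P).x ≫ par w n T.obj₃ ≫ (γ ≫ e)) := by
          rw [Preadditive.comp_sub, Preadditive.comp_sub]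
      _ = θ ≫ e - θ ≫ e := by rw [he', h2]
      _ = 0 := sub_self _
  refine ⟨⟨ψ, hmemψ⟩, ?_⟩
  apply Subtype.ext
  show tmap w n T.mor₂ ≫ ψ = φ.1
  have hbγ : tmap w n T.mor₂ ≫ γ = 0 := comp_distTriang_mor_zero₁₂ _ hTb
  rw [hψdef, Preadditive.comp_sub, ← Category.assoc, hbγ, zero_comp, sub_zero, ← hψ₀']

end Stmt4Aux

/-- If every cohomological functor `Cᵒᵖ ⥤ Ab` of weight range `[m, n]` vanishes
on `M`, then `M` is without weights `m, …, n`. -/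
theorem stmt4 (w : WeightStructure C) (m n : ℤ) (hmn : m ≤ n) (M : C)
    (hM : ∀ (H : Cᵒᵖ ⥤ AddCommGrpCat.{v}) [H.Additive], IsCohomological H →
      WeightRange w m n H → IsZero (H.obj (op M))) :
    M ∈ w.without m n := by
  classical
  obtain ⟨B, B'', y', y, δ', hdist', hB, hB''⟩ := w.decomp M (m - 1)
  have hrange : WeightRange w m n (Stmt4Aux.Hfun w n B'') := by
    constructor
    · intro X hX
      exact Stmt4Aux.isZero_of_le w n B'' m (by omega) hB'' hX
    · intro X hX
      exact Stmt4Aux.isZero_of_ge w n B'' hX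
  have hz := hM (Stmt4Aux.Hfun w n B'') (Stmt4Aux.Hfun_cohomological w n B'') hrange
  have hmem : (Stmt4Aux.dec w n M).x ≫ y ∈ Stmt4Aux.Zsub w n B'' M := by
    rw [Stmt4Aux.mem_Zsub]
    have h0 : Stmt4Aux.par w n M ≫ (Stmt4Aux.dec w n M).x ≫ y = 0 := by
      rw [← Category.assoc, Stmt4Aux.par_comp_x, zero_comp]
    rw [h0]
    exact AddSubgroup.zero_mem _
  have hElem : ((⟨(Stmt4Aux.dec w n M).x ≫ y, hmem⟩ : Stmt4Aux.Zsub w n B'' M)) = 0 :=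
    Stmt4Aux.elem_zero hz _
  have hxy : (Stmt4Aux.dec w n M).x ≫ y = 0 := congrArg Subtype.val hElem
  refine ⟨(Stmt4Aux.dec w n M).A, (Stmt4Aux.dec w n M).A', B, B'',
    (Stmt4Aux.dec w n M).x, (Stmt4Aux.dec w n M).x', y', y,
    ⟨⟨(Stmt4Aux.dec w n M).δ, (Stmt4Aux.dec w n M).dist⟩,
      (Stmt4Aux.dec w n M).hA, (Stmt4Aux.dec w n M).hA'⟩,
    ⟨⟨δ', hdist'⟩, hB, hB''⟩, ?_⟩
  rw [Category.id_comp]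
  exact hxy
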